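/- Every independent extension-set 𝕊 with 𝕊 ⊆ 𝕊⁺ belongs to the c-signature of stable semantics, i.e., there exists a stb-compact AF F with stb(F) = 𝕊. -/

import Mathlib

structure AF where
  A : Finset ℕ
  R : Set (ℕ × ℕ)
  R_sub : ∀ p ∈ R, p.1 ∈ A ∧ p.2 ∈ A

namespace AF

def cf (F : AF) : Set (Set ℕ) :=
  {S | S ⊆ ↑F.A ∧ ∀ a ∈ S, ∀ b ∈ S, (a, b) ∉ F.R}

def defends (F : AF) (S : Set ℕ) (a : ℕ) : Prop :=
  ∀ b, (b, a) ∈ F.R → ∃ s ∈ S, (s, b) ∈ F.R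

def adm (F : AF) : Set (Set ℕ) :=
  {S | S ∈ F.cf ∧ ∀ a ∈ S, F.defends S a}

def rng (F : AF) (S : Set ℕ) : Set ℕ :=
  S ∪ {b | ∃ s ∈ S, (s, b) ∈ F.R}

def naive (F : AF) : Set (Set ℕ) :=
  {S | S ∈ F.cf ∧ ∀ T ∈ F.cf, S ⊆ T → S = T}

def stb (F : AF) : Set (Set ℕ) :=
  {S | S ∈ F.cf ∧ ∀ a ∈ F.A, a ∉ S → ∃ s ∈ S, (s, a) ∈ F.R}

def pref (F : AF) : Set (Set ℕ) :=
  {S | S ∈ F.adm ∧ ∀ T ∈ F.adm, S ⊆ T → S = T}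

def stage (F : AF) : Set (Set ℕ) :=
  {S | S ∈ F.cf ∧ ¬ ∃ T ∈ F.cf, F.rng S ⊂ F.rng T}

def sem (F : AF) : Set (Set ℕ) :=
  {S | S ∈ F.adm ∧ ¬ ∃ T ∈ F.adm, F.rng S ⊂ F.rng T}

end AF

abbrev Semantics := AF → Set (Set ℕ)

def StandardSemantics : Set Semantics :=
  {AF.naive, AF.stb, AF.stage, AF.pref, AF.sem}

def AFCompact (σ : Semantics) (F : AF) : Prop :=
  ∀ a ∈ F.A, ∃ S ∈ σ F, a ∈ S

def CAF (σ : Semantics) : Set AF := {F | AFCompact σ F}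

def ArgS (𝕊 : Set (Set ℕ)) : Set ℕ := ⋃₀ 𝕊

def PairsS (𝕊 : Set (Set ℕ)) : Set (ℕ × ℕ) :=
  {p | ∃ S ∈ 𝕊, p.1 ∈ S ∧ p.2 ∈ S}

def IsExtensionSet (𝕊 : Set (Set ℕ)) : Prop := (ArgS 𝕊).Finite

def AFStep (F : AF) (a b : ℕ) : Prop := (a, b) ∈ F.R ∨ (b, a) ∈ F.R

def AFConnected (F : AF) : Prop :=
  ∀ a ∈ F.A, ∀ b ∈ F.A, Relation.ReflTransGen (AFStep F) a b

def sameComp (F : AF) (a b : ℕ) : Prop := Relation.ReflTransGen (AFStep F) a b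

def comps (F : AF) : Set (Set ℕ) :=
  {K | ∃ a ∈ F.A, K = {b ∈ (↑F.A : Set ℕ) | sameComp F a b}}

def nopairs (𝕊 : Set (Set ℕ)) (a b : ℕ) : Prop :=
  a ∈ ArgS 𝕊 ∧ b ∈ ArgS 𝕊 ∧ (a, b) ∉ PairsS 𝕊

def compsS (𝕊 : Set (Set ℕ)) : Set (Set ℕ) :=
  {K | ∃ a ∈ ArgS 𝕊, K = {b ∈ ArgS 𝕊 | Relation.ReflTransGen (nopairs 𝕊) a b}}

noncomputable def sigmaMax (σ : Semantics) (n : ℕ) : ℕ :=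
  sSup {k | ∃ F : AF, F.A.card = n ∧ (σ F).ncard = k}

noncomputable def sigmaMaxCon (σ : Semantics) (n : ℕ) : ℕ :=
  sSup {k | ∃ F : AF, F.A.card = n ∧ AFConnected F ∧ (σ F).ncard = k}

noncomputable def sigmaMax2 (σ : Semantics) (n : ℕ) : ℕ :=
  sSup ({k | ∃ F : AF, F.A.card = n ∧ (σ F).ncard = k} \ {sigmaMax σ n})

def cfSet (𝕊 : Set (Set ℕ)) : Set (Set ℕ) :=
  {S | S ⊆ ArgS 𝕊 ∧ ∀ a ∈ S, ∀ b ∈ S, (a, b) ∈ PairsS 𝕊}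

def plusSet (𝕊 : Set (Set ℕ)) : Set (Set ℕ) :=
  {S | S ∈ cfSet 𝕊 ∧ ∀ T ∈ cfSet 𝕊, S ⊆ T → S = T}

def minusSet (𝕊 : Set (Set ℕ)) : Set (Set ℕ) := plusSet 𝕊 \ 𝕊

def Sig (σ : Semantics) : Set (Set (Set ℕ)) := {𝕊 | ∃ F : AF, σ F = 𝕊}

def cSig (σ : Semantics) : Set (Set (Set ℕ)) :=
  {𝕊 | ∃ F : AF, AFCompact σ F ∧ σ F = 𝕊}

def Pcon (σ : Semantics) (n : ℕ) : Set ℕ :=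
  {k | ∃ F : AF, AFCompact σ F ∧ AFConnected F ∧ F.A.card = n ∧ (σ F).ncard = k}

open Classical in
noncomputable def restrictAF (F : AF) (K : Set ℕ) : AF where
  A := F.A.filter (fun a => a ∈ K)
  R := {p | p ∈ F.R ∧ p.1 ∈ K ∧ p.2 ∈ K}
  R_sub := fun p hp => by
    have h := F.R_sub p hp.1
    simp only [Finset.mem_filter]
    exact ⟨⟨h.1, hp.2.1⟩, ⟨h.2, hp.2.2⟩⟩

def IsExclusionMapping (𝕊 : Set (Set ℕ)) (Rm : Set (ℕ × ℕ)) : Prop :=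
  ∃ f : Set ℕ → ℕ,
    (∀ S ∈ minusSet 𝕊, f S ∈ ArgS 𝕊 ∧ f S ∉ S) ∧
    Rm = {p | ∃ S ∈ minusSet 𝕊, p.1 ∈ S ∧ p.2 = f S ∧ p ∉ PairsS 𝕊}

def Independent (𝕊 : Set (Set ℕ)) : Prop :=
  ∃ Rm : Set (ℕ × ℕ), IsExclusionMapping 𝕊 Rm ∧
    (∀ a b, (a, b) ∈ Rm → (b, a) ∈ Rm → a = b) ∧
    ∀ S ∈ 𝕊, ∀ a ∈ ArgS 𝕊 \ S, ∃ s ∈ S, (s, a) ∉ Rm ∪ PairsS 𝕊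

def ConflictExplicit (σ : Semantics) (F : AF) : Prop :=
  ∀ a ∈ F.A, ∀ b ∈ F.A, (a, b) ∉ PairsS (σ F) → (a, b) ∈ F.R ∨ (b, a) ∈ F.R

noncomputable def canonicalCF (𝕊 : Set (Set ℕ)) (h : IsExtensionSet 𝕊) : AF where
  A := h.toFinset
  R := {p | p.1 ∈ ArgS 𝕊 ∧ p.2 ∈ ArgS 𝕊 ∧ p ∉ PairsS 𝕊}
  R_sub := fun p hp => by
    exact ⟨by first | exact (Set.Finite.mem_toFinset h).2 hp.1 | exact Set.Finite.mem_toFinset.2 hp.1,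
      by first | exact (Set.Finite.mem_toFinset h).2 hp.2.1 | exact Set.Finite.mem_toFinset.2 hp.2.1⟩
theorem independent_implies_compactly_stb_realizable (𝕊 : Set (Set ℕ))
    (hext : IsExtensionSet 𝕊) (hind : Independent 𝕊) (hsub : 𝕊 ⊆ plusSet 𝕊) :
    ∃ F : AF, AFCompact AF.stb F ∧ AF.stb F = 𝕊 := by
  obtain ⟨Rm, ⟨f, hf, hRm⟩, hanti, hdef⟩ := hind
  have pairs_symm : ∀ a b : ℕ, (a, b) ∈ PairsS 𝕊 → (b, a) ∈ PairsS 𝕊 := by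
    rintro a b ⟨S, hS, ha, hb⟩; exact ⟨S, hS, hb, ha⟩
  have hRm_no_self : ∀ a : ℕ, (a, a) ∉ Rm := by
    intro a ha
    rw [hRm] at ha
    obtain ⟨S, hSm, haS, hfa, _⟩ := ha
    exact (hf S hSm).2 (hfa ▸ haS)
  let F : AF := { A := hext.toFinset
                  R := {p | p.1 ∈ ArgS 𝕊 ∧ p.2 ∈ ArgS 𝕊 ∧ p ∉ PairsS 𝕊 ∧ p ∉ Rm}
                  R_sub := fun p hp => by
                    exact ⟨(Set.Finite.mem_toFinset hext).2 hp.1, (Set.Finite.mem_toFinset hext).2 hp.2.1⟩ }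
  have hA : ∀ a : ℕ, a ∈ F.A ↔ a ∈ ArgS 𝕊 := fun a => Set.Finite.mem_toFinset hext
  have hRmem : ∀ p : ℕ × ℕ,
      p ∈ F.R ↔ p.1 ∈ ArgS 𝕊 ∧ p.2 ∈ ArgS 𝕊 ∧ p ∉ PairsS 𝕊 ∧ p ∉ Rm := fun p => Iff.rfl
  have hcf : ∀ S : Set ℕ, S ∈ F.cf ↔ S ∈ cfSet 𝕊 := by
    intro S
    constructor
    · rintro ⟨hsub', hconf⟩
      have hSA : S ⊆ ArgS 𝕊 := fun a ha => (hA a).1 (hsub' ha)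
      refine ⟨hSA, fun a ha b hb => ?_⟩
      by_contra hp
      have hab : (a, b) ∈ Rm := by
        by_contra h
        exact hconf a ha b hb ((hRmem (a, b)).2 ⟨hSA ha, hSA hb, hp, h⟩)
      have hpba : (b, a) ∉ PairsS 𝕊 := fun h => hp (pairs_symm b a h)
      have hba : (b, a) ∈ Rm := by
        by_contra h
        exact hconf b hb a ha ((hRmem (b, a)).2 ⟨hSA hb, hSA ha, hpba, h⟩)
      have : a = b := hanti a b hab hba
      subst this
      exact hRm_no_self a hab
    · rintro ⟨hSA, hpairs⟩
      refine ⟨fun a ha => (hA a).2 (hSA ha), fun a ha b hb hr => ?_⟩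
      exact ((hRmem (a, b)).1 hr).2.2.1 (hpairs a ha b hb)
  have hstb : AF.stb F = 𝕊 := by
    apply Set.eq_of_subset_of_subset
    · rintro E ⟨hEcf, hEst⟩
      have hEcfS : E ∈ cfSet 𝕊 := (hcf E).1 hEcf
      have hEplus : E ∈ plusSet 𝕊 := by
        refine ⟨hEcfS, fun T hT hET => ?_⟩
        apply Set.Subset.antisymm hET
        intro t ht
        by_contra htE
        have htA : t ∈ F.A := (hA t).2 (hT.1 ht)
        obtain ⟨s, hsE, hsR⟩ := hEst t htA htE
        exact ((hRmem (s, t)).1 hsR).2.2.1 (hT.2 s (hET hsE) t ht)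
      by_contra hE𝕊
      have hEm : E ∈ minusSet 𝕊 := ⟨hEplus, hE𝕊⟩
      have hfE : f E ∈ ArgS 𝕊 ∧ f E ∉ E := hf E hEm
      obtain ⟨s, hsE, hsR⟩ := hEst (f E) ((hA (f E)).2 hfE.1) hfE.2
      have hsR' := (hRmem (s, f E)).1 hsR
      apply hsR'.2.2.2
      rw [hRm]
      exact ⟨E, hEm, hsE, rfl, hsR'.2.2.1⟩
    · intro S hS
      have hSplus := hsub hS
      have hScf : S ∈ cfSet 𝕊 := hSplus.1
      refine ⟨(hcf S).2 hScf, fun a haA haS => ?_⟩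
      have haArg : a ∈ ArgS 𝕊 := (hA a).1 haA
      obtain ⟨s, hsS, hs⟩ := hdef S hS a ⟨haArg, haS⟩
      exact ⟨s, hsS, (hRmem (s, a)).2
        ⟨hScf.1 hsS, haArg, fun h => hs (Or.inr h), fun h => hs (Or.inl h)⟩⟩
  refine ⟨F, ?_, hstb⟩
  intro a haA
  obtain ⟨S, hS, haS⟩ := (hA a).1 haA
  exact ⟨S, hstb ▸ hS, haS⟩
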